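/- arXiv:1811.07518 — 7 statements merged into one kernel-verified Lean document; each statement's English description precedes it below -/
import Mathlib

section
/- For an $L_x \times L_y$ rectangular lattice, the number of unordered pairs of distinct lattice sites whose taxicab distance equals $m$, for $1 \le m \le \min(L_x, L_y)$, is $2mL_xL_y - (L_x+L_y)m^2 + \frac{m^3-m}{3}$. -/
/-- Taxicab distance between two integer lattice points. -/
def taxi (p q : ℤ × ℤ) : ℤ := |p.1 - q.1| + |p.2 - q.2|

/-- The `Lx × Ly` rectangular lattice `{1,…,Lx} × {1,…,Ly}`. -/
noncomputable def sites (Lx Ly : ℤ) : Finset (ℤ × ℤ) := Finset.Icc (1, 1) (Lx, Ly)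

/-- The number of unordered pairs of distinct lattice sites at taxicab distance `m`. -/
noncomputable def pairCount (Lx Ly m : ℤ) : ℕ :=
  (((sites Lx Ly).powersetCard 2).filter
    (fun s => ∃ p ∈ s, ∃ q ∈ s, p ≠ q ∧ taxi p q = m)).card

open Finset

noncomputable def Tset (Lx Ly m : ℤ) : Finset ((ℤ×ℤ) × (ℤ×ℤ)) :=
  (sites Lx Ly ×ˢ sites Lx Ly).filter (fun z => z.1 ≠ z.2 ∧ taxi z.1 z.2 = m)

lemma mem_sites {Lx Ly : ℤ} {p : ℤ×ℤ} :
    p ∈ sites Lx Ly ↔ (1 ≤ p.1 ∧ p.1 ≤ Lx) ∧ (1 ≤ p.2 ∧ p.2 ≤ Ly) := by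
  simp [sites, Finset.mem_Icc, Prod.le_def]; tauto

lemma fiberB (Lx Ly m : ℤ) (hm1 : 1 ≤ m) (hx : m ≤ Lx) (hy : m ≤ Ly) (dx dy : ℤ)
    (hd1 : |dx| + |dy| = m) :
    ((Tset Lx Ly m).filter (fun z => z.1 - z.2 = (dx, dy))).card
      = (Lx - |dx|).toNat * (Ly - |dy|).toNat := by
  obtain ⟨s, hs, hs2⟩ : ∃ s, |dx| = s ∧ (s = dx ∨ s = -dx) := ⟨_, rfl, abs_choice dx⟩
  obtain ⟨t, ht, ht2⟩ : ∃ t, |dy| = t ∧ (t = dy ∨ t = -dy) := ⟨_, rfl, abs_choice dy⟩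
  have hs0 : 0 ≤ s := hs ▸ abs_nonneg dx
  have ht0 : 0 ≤ t := ht ▸ abs_nonneg dy
  have hst : s + t = m := by rw [← hs, ← ht]; exact hd1
  rw [hs, ht]
  have himg : (Tset Lx Ly m).filter (fun z => z.1 - z.2 = (dx, dy))
      = (Finset.Icc (max 1 (1-dx)) (min Lx (Lx-dx)) ×ˢ
         Finset.Icc (max 1 (1-dy)) (min Ly (Ly-dy))).image (fun q => (q + (dx,dy), q)) := by
    ext z
    obtain ⟨⟨a,b⟩,⟨c,e⟩⟩ := z
    simp only [Tset, Finset.mem_filter, Finset.mem_product, Finset.mem_image, mem_sites,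
      Finset.mem_Icc, taxi, Prod.mk_sub_mk, Prod.mk_add_mk, Prod.mk.injEq, Prod.exists,
      ne_eq, Prod.ext_iff]
    constructor
    · rintro ⟨⟨⟨hA, hC⟩, hne, htax⟩, h1, h2⟩
      exact ⟨c, e, by omega, ⟨by omega, by omega⟩, rfl, rfl⟩
    · rintro ⟨u, v, ⟨hu, hv⟩, ⟨h1, h2⟩, rfl, rfl⟩
      have e1 : a - u = dx := by omega
      have e2 : b - v = dy := by omega
      refine ⟨⟨⟨by omega, by omega⟩, ?_, ?_⟩, by omega, by omega⟩
      · rintro ⟨g1, g2⟩; omega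
      · rw [e1, e2]; exact hd1
  rw [himg, Finset.card_image_of_injective _ (fun x y h => by simpa using congrArg Prod.snd h),
    Finset.card_product, Int.card_Icc, Int.card_Icc]
  have c1 : (Lx ⊓ (Lx - dx) + 1 - 1 ⊔ (1 - dx)).toNat = (Lx - s).toNat := by omega
  have c2 : (Ly ⊓ (Ly - dy) + 1 - 1 ⊔ (1 - dy)).toNat = (Ly - t).toNat := by omega
  rw [c1, c2]

lemma cardT (Lx Ly m : ℤ) (hm1 : 1 ≤ m) (hx : m ≤ Lx) (hy : m ≤ Ly) :
    ((Tset Lx Ly m).card : ℤ)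
      = ∑ d ∈ (Finset.Icc ((-m,-m) : ℤ×ℤ) (m,m)).filter (fun d => |d.1| + |d.2| = m),
          (Lx - |d.1|) * (Ly - |d.2|) := by
  have hmem : ∀ z ∈ Tset Lx Ly m,
      z.1 - z.2 ∈ (Finset.Icc ((-m,-m):ℤ×ℤ) (m,m)).filter (fun d => |d.1|+|d.2| = m) := by
    intro z hz
    simp only [Tset, Finset.mem_filter, Finset.mem_product] at hz
    obtain ⟨-, hne, htax⟩ := hz
    have h1 : |z.1.1 - z.2.1| + |z.1.2 - z.2.2| = m := htax
    simp only [Finset.mem_filter, Finset.mem_Icc, Prod.le_def]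
    have hc1 : (z.1 - z.2).1 = z.1.1 - z.2.1 := rfl
    have hc2 : (z.1 - z.2).2 = z.1.2 - z.2.2 := rfl
    rw [hc1, hc2]
    have a1 := abs_nonneg (z.1.1 - z.2.1)
    have a2 := abs_nonneg (z.1.2 - z.2.2)
    have b1 := abs_le.mp (show |z.1.1 - z.2.1| ≤ m by linarith)
    have b2 := abs_le.mp (show |z.1.2 - z.2.2| ≤ m by linarith)
    exact ⟨⟨⟨b1.1, b2.1⟩, ⟨b1.2, b2.2⟩⟩, h1⟩
  rw [Finset.card_eq_sum_card_fiberwise hmem]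
  push_cast
  refine Finset.sum_congr rfl ?_
  intro d hd
  simp only [Finset.mem_filter, Finset.mem_Icc] at hd
  obtain ⟨-, hd1⟩ := hd
  have h2 : ((Tset Lx Ly m).filter (fun z => z.1 - z.2 = d)).card
      = (Lx - |d.1|).toNat * (Ly - |d.2|).toNat := by
    have h := fiberB Lx Ly m hm1 hx hy d.1 d.2 hd1
    simpa using h
  rw [h2]
  have n1 : (0:ℤ) ≤ Lx - |d.1| := by
    have := abs_nonneg d.2; linarith
  have n2 : (0:ℤ) ≤ Ly - |d.2| := by
    have := abs_nonneg d.1; linarith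
  push_cast [Int.toNat_of_nonneg n1, Int.toNat_of_nonneg n2]
  rfl

lemma key_sum (A B : ℤ) (n : ℕ) :
    6 * ∑ a ∈ Finset.Icc (1:ℤ) (n:ℤ), (A - a) * (B + a)
      = 6*n*A*B + 3*n*(n+1)*(A-B) - n*(n+1)*(2*n+1) := by
  induction n with
  | zero => simp
  | succ k ih =>
      have h : Finset.Icc (1:ℤ) ((k+1:ℕ):ℤ) = insert ((k:ℤ)+1) (Finset.Icc (1:ℤ) (k:ℤ)) := by
        ext x; simp [Finset.mem_Icc]; omega
      rw [h, Finset.sum_insert (by simp [Finset.mem_Icc])]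
      push_cast at ih ⊢
      linear_combination ih

lemma sumD (Lx Ly m : ℤ) (hm1 : 1 ≤ m) :
    3 * ∑ d ∈ (Finset.Icc ((-m,-m) : ℤ×ℤ) (m,m)).filter (fun d => |d.1| + |d.2| = m),
        (Lx - |d.1|) * (Ly - |d.2|)
      = 12*m*Lx*Ly - 6*(Lx+Ly)*m^2 + 2*(m^3 - m) := by
  have hprod : Finset.Icc ((-m,-m) : ℤ×ℤ) (m,m) = Finset.Icc (-m) m ×ˢ Finset.Icc (-m) m := rfl
  rw [hprod, Finset.sum_filter, Finset.sum_product]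
  dsimp only
  -- inner sum
  have inner : ∀ a ∈ Finset.Icc (-m) m,
      (∑ b ∈ Finset.Icc (-m) m, if |a| + |b| = m then (Lx - |a|) * (Ly - |b|) else 0)
        = (Lx - |a|) * ((if |a| = m then 1 else 2) * (Ly - m + |a|)) := by
    intro a ha
    rw [Finset.mem_Icc] at ha
    have h0 : (0:ℤ) ≤ |a| := abs_nonneg a
    have ham : |a| ≤ m := abs_le.mpr ha
    rw [← Finset.sum_filter]
    have hfil : (Finset.Icc (-m) m).filter (fun b => |a| + |b| = m)
        = if |a| = m then ({0} : Finset ℤ) else {m - |a|, |a| - m} := by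
      split_ifs with h
      · ext b
        simp only [Finset.mem_filter, Finset.mem_Icc, Finset.mem_singleton]
        rcases abs_cases b with ⟨h1, h2⟩ | ⟨h1, h2⟩ <;> rw [h1] <;> omega
      · ext b
        simp only [Finset.mem_filter, Finset.mem_Icc, Finset.mem_insert, Finset.mem_singleton]
        rcases abs_cases b with ⟨h1, h2⟩ | ⟨h1, h2⟩ <;> rw [h1] <;> omega
    rw [hfil]
    split_ifs with h
    · simp [h]
    · rw [Finset.sum_pair (by omega)]
      have e1 : abs (m - |a|) = m - |a| := abs_of_nonneg (by omega)
      have e2 : abs (|a| - m) = m - |a| := by rw [abs_of_nonpos (by omega)]; ring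
      rw [e1, e2]; ring
  rw [Finset.sum_congr rfl inner]
  -- outer sum: split by sign
  have hsplit : Finset.Icc (-m) m = ((Finset.Icc 1 m).image (fun x => -x)) ∪ Finset.Icc 0 m := by
    ext x
    simp only [Finset.mem_union, Finset.mem_image, Finset.mem_Icc]
    constructor
    · intro ⟨h1, h2⟩
      rcases le_or_gt 0 x with h | h
      · right; exact ⟨h, h2⟩
      · left; exact ⟨-x, ⟨by omega, by omega⟩, by omega⟩
    · rintro (⟨a, ⟨ha1, ha2⟩, rfl⟩ | h) <;> omega
  have hdisj : Disjoint ((Finset.Icc (1:ℤ) m).image (fun x => -x)) (Finset.Icc 0 m) := by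
    rw [Finset.disjoint_left]
    rintro x hx hx2
    simp only [Finset.mem_image, Finset.mem_Icc] at hx hx2
    obtain ⟨a, ⟨ha1, ha2⟩, rfl⟩ := hx
    omega
  rw [hsplit, Finset.sum_union hdisj,
    Finset.sum_image (by intro x _ y _ h; exact neg_injective h)]
  have habs : ∀ a ∈ Finset.Icc (1:ℤ) m, |(-a)| = a := by
    intro a ha; rw [Finset.mem_Icc] at ha; rw [abs_neg, abs_of_pos]; omega
  have e1 : ∀ a ∈ Finset.Icc (1:ℤ) m,
      (Lx - |(-a)|) * ((if |(-a)| = m then 1 else 2) * (Ly - m + |(-a)|))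
        = (Lx - a) * ((if a = m then 1 else 2) * (Ly - m + a)) := by
    intro a ha; rw [habs a ha]
  rw [Finset.sum_congr rfl e1]
  have h0m : Finset.Icc (0:ℤ) m = insert 0 (Finset.Icc 1 m) := by
    ext x; simp [Finset.mem_Icc]; omega
  have e1b : ∀ a ∈ Finset.Icc (1:ℤ) m,
      (Lx - |a|) * ((if |a| = m then 1 else 2) * (Ly - m + |a|))
        = (Lx - a) * ((if a = m then 1 else 2) * (Ly - m + a)) := by
    intro a ha
    rw [Finset.mem_Icc] at ha
    rw [abs_of_pos (by omega)]
  rw [h0m, Finset.sum_insert (by simp), Finset.sum_congr rfl e1b]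
  have h0 : (Lx - |(0:ℤ)|) * ((if |(0:ℤ)| = m then 1 else 2) * (Ly - m + |(0:ℤ)|))
      = Lx * (2 * (Ly - m)) := by
    rw [abs_zero, if_neg (by omega)]; ring
  rw [h0]
  have h1m : Finset.Icc (1:ℤ) m = insert m (Finset.Icc 1 (m-1)) := by
    ext x; simp [Finset.mem_Icc]; omega
  have e2 : ∑ a ∈ Finset.Icc (1:ℤ) m, (Lx - a) * ((if a = m then 1 else 2) * (Ly - m + a))
      = (Lx - m) * Ly + 2 * ∑ a ∈ Finset.Icc (1:ℤ) (m-1), (Lx - a) * ((Ly - m) + a) := by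
    rw [h1m, Finset.sum_insert (by simp [Finset.mem_Icc])]
    rw [if_pos rfl, Finset.mul_sum]
    have : ∀ a ∈ Finset.Icc (1:ℤ) (m-1),
        (Lx - a) * ((if a = m then 1 else 2) * (Ly - m + a)) = 2 * ((Lx - a) * ((Ly - m) + a)) := by
      intro a ha; rw [Finset.mem_Icc] at ha; rw [if_neg (by omega)]; ring
    rw [Finset.sum_congr rfl this]; ring
  rw [e2]
  have hn : (((m-1).toNat : ℤ)) = m - 1 := Int.toNat_of_nonneg (by omega)
  have e3 := key_sum Lx (Ly - m) (m-1).toNat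
  rw [hn] at e3
  linear_combination 2 * e3

lemma taxi_comm (p q : ℤ × ℤ) : taxi p q = taxi q p := by
  unfold taxi; rw [abs_sub_comm, abs_sub_comm p.2]

lemma doubleCount (Lx Ly m : ℤ) :
    (Tset Lx Ly m).card = 2 * pairCount Lx Ly m := by
  have h1 : ∀ z ∈ Tset Lx Ly m,
      ({z.1, z.2} : Finset (ℤ×ℤ)) ∈ ((sites Lx Ly).powersetCard 2).filter
        (fun s => ∃ p ∈ s, ∃ q ∈ s, p ≠ q ∧ taxi p q = m) := by
    intro z hz
    simp only [Tset, Finset.mem_filter, Finset.mem_product] at hz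
    obtain ⟨⟨hz1, hz2⟩, hne, htax⟩ := hz
    rw [Finset.mem_filter, Finset.mem_powersetCard]
    refine ⟨⟨?_, Finset.card_pair hne⟩, z.1, by simp, z.2, by simp, hne, htax⟩
    intro x hx
    simp only [Finset.mem_insert, Finset.mem_singleton] at hx
    rcases hx with rfl | rfl <;> assumption
  rw [Finset.card_eq_sum_card_fiberwise h1]
  have h2 : ∀ s ∈ ((sites Lx Ly).powersetCard 2).filter
        (fun s => ∃ p ∈ s, ∃ q ∈ s, p ≠ q ∧ taxi p q = m),
      ((Tset Lx Ly m).filter (fun z => ({z.1, z.2} : Finset (ℤ×ℤ)) = s)).card = 2 := by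
    intro s hs
    rw [Finset.mem_filter, Finset.mem_powersetCard] at hs
    obtain ⟨⟨hsub, hcard⟩, hex⟩ := hs
    obtain ⟨p, q, hpq, rfl⟩ := Finset.card_eq_two.mp hcard
    have htaxi : taxi p q = m := by
      obtain ⟨p', hp', q', hq', hne', ht'⟩ := hex
      simp only [Finset.mem_insert, Finset.mem_singleton] at hp' hq'
      rcases hp' with rfl | rfl <;> rcases hq' with rfl | rfl
      · exact absurd rfl hne'
      · exact ht'
      · rw [taxi_comm]; exact ht'
      · exact absurd rfl hne'
    have hfe : (Tset Lx Ly m).filter (fun z => ({z.1, z.2} : Finset (ℤ×ℤ)) = {p, q})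
        = {(p,q), (q,p)} := by
      ext z
      simp only [Tset, Finset.mem_filter, Finset.mem_product, Finset.mem_insert,
        Finset.mem_singleton]
      constructor
      · rintro ⟨⟨⟨hz1, hz2⟩, hne, ht⟩, hset⟩
        have m1 : z.1 ∈ ({p, q} : Finset (ℤ×ℤ)) := by rw [← hset]; simp
        have m2 : z.2 ∈ ({p, q} : Finset (ℤ×ℤ)) := by rw [← hset]; simp
        simp only [Finset.mem_insert, Finset.mem_singleton] at m1 m2
        rcases m1 with e1 | e1 <;> rcases m2 with e2 | e2
        · exact absurd (e1.trans e2.symm) hne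
        · left; exact Prod.ext e1 e2
        · right; exact Prod.ext e1 e2
        · exact absurd (e1.trans e2.symm) hne
      · have hps : p ∈ sites Lx Ly := hsub (by simp)
        have hqs : q ∈ sites Lx Ly := hsub (by simp)
        rintro (rfl | rfl)
        · exact ⟨⟨⟨hps, hqs⟩, hpq, htaxi⟩, rfl⟩
        · exact ⟨⟨⟨hqs, hps⟩, fun h => hpq h.symm, by rw [taxi_comm]; exact htaxi⟩,
            Finset.pair_comm q p⟩
    rw [hfe]
    exact Finset.card_pair (fun h => hpq (congrArg Prod.fst h))
  rw [Finset.sum_congr rfl h2, Finset.sum_const, smul_eq_mul, mul_comm]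
  rfl

theorem stmt0 (Lx Ly m : ℤ) (hLx : 1 ≤ Lx) (hLy : 1 ≤ Ly)
    (hm1 : 1 ≤ m) (hm2 : m ≤ min Lx Ly) :
    (pairCount Lx Ly m : ℤ) = 2 * m * Lx * Ly - (Lx + Ly) * m ^ 2 + (m ^ 3 - m) / 3 := by
  have hx : m ≤ Lx := le_trans hm2 (min_le_left _ _)
  have hy : m ≤ Ly := le_trans hm2 (min_le_right _ _)
  have hdc := doubleCount Lx Ly m
  have hct := cardT Lx Ly m hm1 hx hy
  have hsum := sumD Lx Ly m hm1
  haveI : Fact (Nat.Prime 3) := ⟨by norm_num⟩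
  have h3 : (3:ℤ) ∣ m ^ 3 - m := by
    have hz : ((m ^ 3 - m : ℤ) : ZMod 3) = 0 := by
      push_cast
      rw [ZMod.pow_card]
      ring
    exact (ZMod.intCast_zmod_eq_zero_iff_dvd _ 3).mp hz
  obtain ⟨k, hk⟩ := h3
  have hdiv : (m ^ 3 - m) / 3 = k := by
    rw [hk]; exact Int.mul_ediv_cancel_left k (by norm_num)
  rw [hdiv]
  have hcast : ((Tset Lx Ly m).card : ℤ) = 2 * (pairCount Lx Ly m : ℤ) := by
    rw [hdc]; push_cast; ring
  rw [hcast] at hct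
  linarith [hct, hsum, hk]
end

section
/- For an $L_x \times L_y$ rectangular lattice with $\min(L_x,L_y) < m < \max(L_x,L_y)$, the number of unordered pairs of distinct lattice sites whose taxicab distance equals $m$ is $D(\min(L_x,L_y)) - \min(L_x,L_y)^2 \cdot (m - \min(L_x,L_y))$, where $D(s) = 2sL_xL_y - (L_x+L_y)s^2 + \frac{s^3-s}{3}$. -/
/-- The first-regime pair-count formula `D(s) = 2 s Lx Ly - (Lx+Ly) s² + (s³ - s)/3`. -/
def Dfirst (Lx Ly s : ℤ) : ℤ := 2 * s * Lx * Ly - (Lx + Ly) * s ^ 2 + (s ^ 3 - s) / 3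

lemma oneD (L d : ℤ) :
    (((Finset.Icc 1 L ×ˢ Finset.Icc 1 L).filter (fun p => p.1 - p.2 = d)).card : ℤ)
      = max (L - |d|) 0 := by
  have himg : ((Finset.Icc 1 L ×ˢ Finset.Icc 1 L).filter (fun p => p.1 - p.2 = d))
      = Finset.image (fun x => (x, x - d)) (Finset.Icc (max 1 (1+d)) (min L (L+d))) := by
    ext ⟨x, y⟩
    simp only [Finset.mem_filter, Finset.mem_product, Finset.mem_Icc, Finset.mem_image,
      Prod.mk.injEq]
    constructor
    · rintro ⟨⟨⟨hx1, hx2⟩, hy1, hy2⟩, hd⟩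
      exact ⟨x, by omega, rfl, by omega⟩
    · rintro ⟨z, hz, rfl, rfl⟩
      omega
  rw [himg, Finset.card_image_of_injective _ (fun a b h => by simpa using congrArg Prod.fst h),
    Int.card_Icc]
  rcases abs_cases d with ⟨h, h2⟩ | ⟨h, h2⟩ <;> rw [h] <;> omega

lemma twoD (Lx Ly dx dy : ℤ) :
    ((((Finset.Icc (1:ℤ) Lx ×ˢ Finset.Icc (1:ℤ) Ly) ×ˢ (Finset.Icc (1:ℤ) Lx ×ˢ Finset.Icc (1:ℤ) Ly)).filter
        (fun pq => pq.1.1 - pq.2.1 = dx ∧ pq.1.2 - pq.2.2 = dy)).card : ℤ)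
      = max (Lx - |dx|) 0 * max (Ly - |dy|) 0 := by
  have key : (((Finset.Icc (1:ℤ) Lx ×ˢ Finset.Icc (1:ℤ) Ly) ×ˢ (Finset.Icc (1:ℤ) Lx ×ˢ Finset.Icc (1:ℤ) Ly)).filter
        (fun pq => pq.1.1 - pq.2.1 = dx ∧ pq.1.2 - pq.2.2 = dy)).card
      = (((Finset.Icc (1:ℤ) Lx ×ˢ Finset.Icc (1:ℤ) Lx).filter (fun p => p.1 - p.2 = dx)) ×ˢ
         ((Finset.Icc (1:ℤ) Ly ×ˢ Finset.Icc (1:ℤ) Ly).filter (fun p => p.1 - p.2 = dy))).card := by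
    apply Finset.card_nbij' (fun pq => ((pq.1.1, pq.2.1), (pq.1.2, pq.2.2)))
      (fun ab => ((ab.1.1, ab.2.1), (ab.1.2, ab.2.2)))
    · rintro ⟨⟨x1, y1⟩, x2, y2⟩ h
      simp only [Finset.mem_coe, Finset.mem_filter, Finset.mem_product] at h ⊢
      tauto
    · rintro ⟨⟨x1, x2⟩, y1, y2⟩ h
      simp only [Finset.mem_coe, Finset.mem_filter, Finset.mem_product] at h ⊢
      tauto
    · rintro ⟨⟨x1, y1⟩, x2, y2⟩ _; rfl
    · rintro ⟨⟨x1, x2⟩, y1, y2⟩ _; rfl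
  rw [key, Finset.card_product]
  push_cast
  rw [oneD, oneD]

/-- the ordered-pair count. -/
noncomputable def ordCount (Lx Ly m : ℤ) : ℕ :=
  ((sites Lx Ly ×ˢ sites Lx Ly).filter (fun pq => taxi pq.1 pq.2 = m)).card

/-- the diamond of difference vectors. -/
noncomputable def diam (m : ℤ) : Finset (ℤ × ℤ) :=
  (Finset.Icc (-m, -m) (m, m)).filter (fun d => |d.1| + |d.2| = m)

lemma ordCount_eq_sum (Lx Ly m : ℤ) :
    (ordCount Lx Ly m : ℤ) =
      ∑ d ∈ diam m, max (Lx - |d.1|) 0 * max (Ly - |d.2|) 0 := by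
  have hmem : ∀ pq ∈ (sites Lx Ly ×ˢ sites Lx Ly).filter (fun pq => taxi pq.1 pq.2 = m),
      (pq.1.1 - pq.2.1, pq.1.2 - pq.2.2) ∈ diam m := by
    rintro ⟨p, q⟩ h
    rw [Finset.mem_filter] at h
    simp only [taxi] at h
    simp only [diam, Finset.mem_filter, Finset.mem_Icc, Prod.le_def]
    have h1 := abs_nonneg (p.1 - q.1)
    have h2 := abs_nonneg (p.2 - q.2)
    have h3 := abs_le.mp (le_refl |p.1 - q.1|)
    have h4 := abs_le.mp (le_refl |p.2 - q.2|)
    refine ⟨⟨⟨?_, ?_⟩, ?_, ?_⟩, h.2⟩ <;> omega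
  rw [ordCount, Finset.card_eq_sum_card_fiberwise hmem]
  push_cast
  apply Finset.sum_congr rfl
  rintro ⟨dx, dy⟩ hd
  simp only [diam, Finset.mem_filter, Finset.mem_Icc] at hd
  rw [Finset.filter_filter]
  have hset : ((sites Lx Ly ×ˢ sites Lx Ly).filter
      (fun pq => taxi pq.1 pq.2 = m ∧ (pq.1.1 - pq.2.1, pq.1.2 - pq.2.2) = (dx, dy)))
      = (((Finset.Icc (1:ℤ) Lx ×ˢ Finset.Icc (1:ℤ) Ly) ×ˢ (Finset.Icc (1:ℤ) Lx ×ˢ Finset.Icc (1:ℤ) Ly)).filter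
        (fun pq => pq.1.1 - pq.2.1 = dx ∧ pq.1.2 - pq.2.2 = dy)) := by
    rw [sites, Finset.Icc_prod_def]
    ext ⟨p, q⟩
    simp only [Finset.mem_filter, Prod.mk.injEq, taxi]
    constructor
    · rintro ⟨hm, _, h1, h2⟩; exact ⟨hm, h1, h2⟩
    · rintro ⟨hm, h1, h2⟩
      refine ⟨hm, ?_, h1, h2⟩
      rw [h1, h2]; exact hd.2
  rw [hset]
  exact_mod_cast twoD Lx Ly dx dy

lemma two_mul_pairCount (Lx Ly m : ℤ) (hm : m ≠ 0) :
    ordCount Lx Ly m = 2 * pairCount Lx Ly m := by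
  classical
  have hne : ∀ p q : ℤ × ℤ, taxi p q = m → p ≠ q := by
    rintro p q h rfl
    simp [taxi] at h
    exact hm h.symm
  have hmem : ∀ pq ∈ (sites Lx Ly ×ˢ sites Lx Ly).filter (fun pq => taxi pq.1 pq.2 = m),
      ({pq.1, pq.2} : Finset (ℤ × ℤ)) ∈ ((sites Lx Ly).powersetCard 2).filter
        (fun s => ∃ p ∈ s, ∃ q ∈ s, p ≠ q ∧ taxi p q = m) := by
    rintro ⟨p, q⟩ h
    simp only [Finset.mem_filter, Finset.mem_product] at h
    obtain ⟨⟨hp, hq⟩, ht⟩ := h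
    have hpq : p ≠ q := hne p q ht
    simp only [Finset.mem_filter, Finset.mem_powersetCard]
    refine ⟨⟨?_, Finset.card_pair hpq⟩, p, by simp, q, by simp, hpq, ht⟩
    intro x hx
    simp only [Finset.mem_insert, Finset.mem_singleton] at hx
    rcases hx with rfl | rfl <;> assumption
  rw [ordCount, Finset.card_eq_sum_card_fiberwise hmem, pairCount,
    Finset.sum_congr rfl, Finset.sum_const, smul_eq_mul, Nat.mul_comm]
  intro u hu
  simp only [Finset.mem_filter, Finset.mem_powersetCard] at hu
  obtain ⟨⟨hsub, hcard⟩, p, hp, q, hq, hpq, ht⟩ := hu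
  obtain ⟨a, b, hab, rfl⟩ := Finset.card_eq_two.mp hcard
  -- taxi a b = m
  have htaxi_comm : ∀ x y : ℤ × ℤ, taxi x y = taxi y x := by
    intro x y; simp [taxi, abs_sub_comm]
  have htab : taxi a b = m := by
    simp only [Finset.mem_insert, Finset.mem_singleton] at hp hq
    rcases hp with rfl | rfl <;> rcases hq with rfl | rfl
    · exact absurd rfl hpq
    · exact ht
    · rw [htaxi_comm]; exact ht
    · exact absurd rfl hpq
  have ha : a ∈ sites Lx Ly := hsub (by simp)
  have hb : b ∈ sites Lx Ly := hsub (by simp)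
  have hfib : ((sites Lx Ly ×ˢ sites Lx Ly).filter (fun pq => taxi pq.1 pq.2 = m)).filter
      (fun pq => ({pq.1, pq.2} : Finset (ℤ × ℤ)) = {a, b}) = {(a, b), (b, a)} := by
    ext ⟨p, q⟩
    simp only [Finset.mem_filter, Finset.mem_product, Finset.mem_insert, Finset.mem_singleton,
      Prod.mk.injEq]
    constructor
    · rintro ⟨⟨⟨hp', hq'⟩, ht'⟩, hpair⟩
      have hpq' : p ≠ q := hne p q ht'
      have hmema : p ∈ ({a, b} : Finset (ℤ × ℤ)) := hpair ▸ (by simp)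
      have hmemb : q ∈ ({a, b} : Finset (ℤ × ℤ)) := hpair ▸ (by simp)
      simp only [Finset.mem_insert, Finset.mem_singleton] at hmema hmemb
      rcases hmema with rfl | rfl <;> rcases hmemb with rfl | rfl
      · exact absurd rfl hpq'
      · left; exact ⟨rfl, rfl⟩
      · right; exact ⟨rfl, rfl⟩
      · exact absurd rfl hpq'
    · rintro (⟨rfl, rfl⟩ | ⟨rfl, rfl⟩)
      · exact ⟨⟨⟨ha, hb⟩, htab⟩, rfl⟩
      · refine ⟨⟨⟨hb, ha⟩, by rw [htaxi_comm]; exact htab⟩, ?_⟩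
        exact Finset.pair_comm _ _
  rw [hfib]
  rw [Finset.card_insert_of_notMem (by
      simp only [Finset.mem_singleton, Prod.mk.injEq, not_and]
      intro h1 _
      exact hab h1),
    Finset.card_singleton]

/-- sum over range closed form -/
lemma sum_cubic (n : ℕ) (A B : ℤ) :
    6 * ∑ k ∈ Finset.range n, (A - (k : ℤ)) * (B + (k : ℤ))
      = 6 * n * A * B + 3 * (A - B) * n * ((n : ℤ) - 1) - n * ((n : ℤ) - 1) * (2 * n - 1) := by
  induction n with
  | zero => simp
  | succ n ih =>
    rw [Finset.sum_range_succ, mul_add, ih]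
    push_cast
    ring

lemma diam_sum (Lx Ly m : ℤ) (hLx : 1 ≤ Lx) (h1 : Lx < m) (h2 : m < Ly) :
    ∑ d ∈ diam m, max (Lx - |d.1|) 0 * max (Ly - |d.2|) 0
      = 2 * (Lx * (Ly - m)) +
        2 * ∑ k ∈ Finset.range (Lx - 1).toNat,
          2 * ((Lx - 1 - (k : ℤ)) * (Ly - m + 1 + (k : ℤ))) := by
  have hm : 1 ≤ m := by omega
  rw [diam, Finset.sum_filter, Finset.Icc_prod_def, Finset.sum_product]
  have hinner : ∀ dx ∈ Finset.Icc (-m) m,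
      (∑ dy ∈ Finset.Icc (-m) m,
        if |dx| + |dy| = m then max (Lx - |dx|) 0 * max (Ly - |dy|) 0 else 0)
      = if |dx| < Lx then 2 * ((Lx - |dx|) * (Ly - (m - |dx|))) else 0 := by
    intro dx hdx
    rw [Finset.mem_Icc] at hdx
    have ha0 : 0 ≤ |dx| := abs_nonneg dx
    by_cases hcase : |dx| < Lx
    · rw [if_pos hcase]
      have hfilter : (Finset.Icc (-m) m).filter (fun dy => |dx| + |dy| = m)
          = {m - |dx|, -(m - |dx|)} := by
        ext dy
        simp only [Finset.mem_filter, Finset.mem_Icc, Finset.mem_insert, Finset.mem_singleton]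
        rcases abs_cases dy with ⟨h, _⟩ | ⟨h, _⟩ <;> rw [h] <;> omega
      rw [← Finset.sum_filter, hfilter, Finset.sum_pair (by omega : m - |dx| ≠ -(m - |dx|))]
      rw [abs_neg, abs_of_nonneg (by omega : (0:ℤ) ≤ m - |dx|)]
      rw [max_eq_left (by omega : (0:ℤ) ≤ Lx - |dx|),
        max_eq_left (by omega : (0:ℤ) ≤ Ly - (m - |dx|))]
      ring
    · rw [if_neg hcase]
      apply Finset.sum_eq_zero
      intro dy _
      rw [max_eq_right (by omega : Lx - |dx| ≤ 0), zero_mul, ite_self]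
  rw [Finset.sum_congr rfl hinner]
  have hsplit : Finset.Icc (-m) m = Finset.Icc (-m) (-1) ∪ Finset.Icc 0 m := by
    ext x; simp only [Finset.mem_Icc, Finset.mem_union]; omega
  rw [hsplit, Finset.sum_union (by
    rw [Finset.disjoint_left]; intro x hx hx'
    simp only [Finset.mem_Icc] at hx hx'; omega)]
  have hneg : Finset.Icc (-m) (-1) = Finset.image Neg.neg (Finset.Icc (1:ℤ) m) := by
    ext x
    simp only [Finset.mem_Icc, Finset.mem_image]
    constructor
    · intro h; exact ⟨-x, by omega, by omega⟩
    · rintro ⟨a, ha, rfl⟩; omega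
  rw [hneg, Finset.sum_image (by intro x _ y _ h; omega)]
  simp only [abs_neg]
  have hins : Finset.Icc (0:ℤ) m = insert 0 (Finset.Icc 1 m) := by
    ext x; simp only [Finset.mem_Icc, Finset.mem_insert]; omega
  rw [hins, Finset.sum_insert (by simp [Finset.mem_Icc])]
  have h0 : (if |(0:ℤ)| < Lx then 2 * ((Lx - |(0:ℤ)|) * (Ly - (m - |(0:ℤ)|))) else 0)
      = 2 * (Lx * (Ly - m)) := by
    rw [if_pos (by simpa using hLx.trans_lt' (by omega))]
    simp
  rw [h0]
  have hred : (∑ a ∈ Finset.Icc (1:ℤ) m,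
      if |a| < Lx then 2 * ((Lx - |a|) * (Ly - (m - |a|))) else 0)
      = ∑ k ∈ Finset.range (Lx - 1).toNat,
          2 * ((Lx - 1 - (k : ℤ)) * (Ly - m + 1 + (k : ℤ))) := by
    rw [← Finset.sum_subset (Finset.Icc_subset_Icc le_rfl (by omega : Lx - 1 ≤ m))
      (by
        intro x hx hnx
        simp only [Finset.mem_Icc] at hx hnx
        rw [if_neg]
        rw [abs_of_nonneg (by omega)]
        omega)]
    have hmap : Finset.Icc (1:ℤ) (Lx-1)
        = Finset.map ⟨fun k : ℕ => 1 + (k:ℤ), (add_right_injective (1:ℤ)).comp Nat.cast_injective⟩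
            (Finset.range (Lx-1).toNat) := by
      ext x
      simp only [Finset.mem_Icc, Finset.mem_map, Finset.mem_range, Function.Embedding.coeFn_mk]
      constructor
      · rintro ⟨hx1, hx2⟩; exact ⟨(x-1).toNat, by omega, by omega⟩
      · rintro ⟨k, hk, rfl⟩; omega
    rw [hmap, Finset.sum_map]
    apply Finset.sum_congr rfl
    intro k hk
    rw [Finset.mem_range] at hk
    simp only [Function.Embedding.coeFn_mk]
    rw [abs_of_nonneg (by positivity : (0:ℤ) ≤ 1 + (k:ℤ)), if_pos (by omega)]
    ring
  rw [hred]
  ring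


lemma taxi_swap (p q : ℤ × ℤ) : taxi p.swap q.swap = taxi p q := by
  simp only [taxi, Prod.fst_swap, Prod.snd_swap]
  ring

lemma pairCount_mem_aux (Lx Ly m : ℤ) (s : Finset (ℤ × ℤ))
    (hs : s ∈ ((sites Lx Ly).powersetCard 2).filter
      (fun s => ∃ p ∈ s, ∃ q ∈ s, p ≠ q ∧ taxi p q = m)) :
    s.image Prod.swap ∈ ((sites Ly Lx).powersetCard 2).filter
      (fun s => ∃ p ∈ s, ∃ q ∈ s, p ≠ q ∧ taxi p q = m) := by
  simp only [Finset.mem_filter, Finset.mem_powersetCard] at hs ⊢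
  obtain ⟨⟨hsub, hcard⟩, p, hp, q, hq, hpq, ht⟩ := hs
  refine ⟨⟨?_, by rw [Finset.card_image_of_injective _ Prod.swap_injective]; exact hcard⟩,
    p.swap, Finset.mem_image_of_mem _ hp, q.swap, Finset.mem_image_of_mem _ hq,
    fun h => hpq (Prod.swap_injective h), by rw [taxi_swap]; exact ht⟩
  intro x hx
  obtain ⟨y, hy, rfl⟩ := Finset.mem_image.mp hx
  have := hsub hy
  simp only [sites, Finset.mem_Icc, Prod.le_def] at this ⊢
  exact ⟨⟨this.1.2, this.1.1⟩, this.2.2, this.2.1⟩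

lemma pairCount_comm (Lx Ly m : ℤ) : pairCount Lx Ly m = pairCount Ly Lx m := by
  apply Finset.card_nbij' (fun s => s.image Prod.swap) (fun s => s.image Prod.swap)
    (fun s hs => pairCount_mem_aux Lx Ly m s hs) (fun s hs => pairCount_mem_aux Ly Lx m s hs)
  · intro s _
    dsimp only
    rw [Finset.image_image]
    simp [Prod.swap_swap_eq]
  · intro s _
    dsimp only
    rw [Finset.image_image]
    simp [Prod.swap_swap_eq]

lemma main_case (Lx Ly m : ℤ) (hLx : 1 ≤ Lx) (h1 : Lx < m) (h2 : m < Ly) :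
    (pairCount Lx Ly m : ℤ) = Dfirst Lx Ly Lx - Lx ^ 2 * (m - Lx) := by
  have hm0 : m ≠ 0 := by omega
  have hord := two_mul_pairCount Lx Ly m hm0
  have hcast : (ordCount Lx Ly m : ℤ) = 2 * (pairCount Lx Ly m : ℤ) := by exact_mod_cast hord
  have hsum := ordCount_eq_sum Lx Ly m
  rw [diam_sum Lx Ly m hLx h1 h2, ← Finset.mul_sum] at hsum
  have hS := sum_cubic (Lx - 1).toNat (Lx - 1) (Ly - m + 1)
  have hn' : (((Lx - 1).toNat : ℤ)) = Lx - 1 := Int.toNat_of_nonneg (by omega)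
  rw [hn'] at hS
  obtain ⟨k, hk⟩ : ∃ k, Lx = 3 * k ∨ Lx = 3 * k + 1 ∨ Lx = 3 * k + 2 := ⟨Lx / 3, by omega⟩
  have hdvd : ∃ q3 : ℤ, Lx ^ 3 - Lx = 3 * q3 := by
    rcases hk with h | h | h
    · exact ⟨9 * k ^ 3 - k, by rw [h]; ring⟩
    · exact ⟨9 * k ^ 3 + 9 * k ^ 2 + 2 * k, by rw [h]; ring⟩
    · exact ⟨9 * k ^ 3 + 18 * k ^ 2 + 11 * k + 2, by rw [h]; ring⟩
  obtain ⟨q3, hq3⟩ := hdvd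
  have hDdiv : (Lx ^ 3 - Lx) / 3 = q3 := by
    rw [hq3]; exact Int.mul_ediv_cancel_left _ (by norm_num)
  simp only [Dfirst]
  rw [hDdiv]
  have h6 : 6 * (pairCount Lx Ly m : ℤ)
      = 6 * (2 * Lx * Lx * Ly - (Lx + Ly) * Lx ^ 2 + q3 - Lx ^ 2 * (m - Lx)) := by
    linear_combination (-3) * hcast + 3 * hsum + 2 * hS + 2 * hq3
  linarith [h6]

theorem stmt2 (Lx Ly m : ℤ) (hLx : 1 ≤ Lx) (hLy : 1 ≤ Ly)
    (hm1 : min Lx Ly < m) (hm2 : m < max Lx Ly) :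
    (pairCount Lx Ly m : ℤ) =
      Dfirst Lx Ly (min Lx Ly) - (min Lx Ly) ^ 2 * (m - min Lx Ly) := by
  rcases le_total Lx Ly with h | h
  · rw [min_eq_left h] at hm1 ⊢
    rw [max_eq_right h] at hm2
    exact main_case Lx Ly m hLx hm1 hm2
  · rw [min_eq_right h] at hm1 ⊢
    rw [max_eq_left h] at hm2
    rw [pairCount_comm, main_case Ly Lx m hLy hm1 hm2]
    simp only [Dfirst]
    ring_nf
end

section
/- In an $L_x \times L_y$ rectangular lattice, the number of unordered pairs of distinct sites at taxicab distance $m$ is a strictly decreasing function of $m$ on the range $\min(L_x,L_y) \le m \le L_x+L_y-2$, decreasing by exactly $\min(L_x,L_y)^2$ per unit increase of $m$ throughout the middle regime $\min(L_x,L_y) \le m < \max(L_x,L_y)$. -/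
namespace Stmt3Aux
open Finset

noncomputable def O (Lx Ly m : ℤ) : Finset ((ℤ×ℤ)×(ℤ×ℤ)) :=
  (sites Lx Ly ×ˢ sites Lx Ly).filter fun pq => taxi pq.1 pq.2 = m

lemma taxi_comm (p q : ℤ×ℤ) : taxi p q = taxi q p := by simp [taxi, abs_sub_comm]
lemma taxi_self (p : ℤ×ℤ) : taxi p p = 0 := by simp [taxi]

noncomputable def diffs (Lx Ly : ℤ) : Finset (ℤ×ℤ) := Finset.Icc (1-Lx, 1-Ly) (Lx-1, Ly-1)

lemma mem_sites {Lx Ly : ℤ} {p : ℤ×ℤ} :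
    p ∈ sites Lx Ly ↔ (1 ≤ p.1 ∧ p.1 ≤ Lx) ∧ 1 ≤ p.2 ∧ p.2 ≤ Ly := by
  simp [sites, Finset.mem_Icc, Prod.le_def, and_assoc, and_left_comm]

lemma card1d (L t : ℤ) :
    ((Finset.Icc (1:ℤ) L).filter fun x => 1 ≤ x + t ∧ x + t ≤ L).card
      = (L - |t|).toNat := by
  have : ((Finset.Icc (1:ℤ) L).filter fun x => 1 ≤ x + t ∧ x + t ≤ L)
      = Finset.Icc (max 1 (1-t)) (min L (L-t)) := by
    ext x; simp only [mem_filter, Finset.mem_Icc, le_max_iff, max_le_iff, le_min_iff,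
      min_le_iff]; omega
  rw [this, Int.card_Icc]
  rcases le_or_gt 0 t with h | h
  · rw [abs_of_nonneg h]; congr 1; omega
  · rw [abs_of_neg h]; congr 1; omega

lemma fiber_card (Lx Ly : ℤ) (d : ℤ×ℤ) :
    (((sites Lx Ly ×ˢ sites Lx Ly).filter fun pq => pq.2 - pq.1 = d)).card
      = (Lx - |d.1|).toNat * (Ly - |d.2|).toNat := by
  classical
  have hbij : (((sites Lx Ly ×ˢ sites Lx Ly).filter fun pq => pq.2 - pq.1 = d)).card
      = ((sites Lx Ly).filter fun p => p + d ∈ sites Lx Ly).card := by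
    apply Finset.card_bij' (fun pq _ => pq.1) (fun p _ => (p, p + d))
    · intro pq hpq
      rw [mem_filter, mem_product] at hpq
      obtain ⟨⟨h1, h2⟩, h3⟩ := hpq
      rw [mem_filter]
      refine ⟨h1, ?_⟩
      have : pq.1 + d = pq.2 := by rw [← h3]; ring
      rw [this]; exact h2
    · intro p hp
      rw [mem_filter] at hp
      rw [mem_filter, mem_product]
      exact ⟨⟨hp.1, hp.2⟩, by ring⟩
    · intro pq hpq
      rw [mem_filter] at hpq
      have : pq.1 + d = pq.2 := by rw [← hpq.2]; ring
      exact Prod.ext rfl this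
    · intro p _; rfl
  rw [hbij]
  have hsplit : ((sites Lx Ly).filter fun p => p + d ∈ sites Lx Ly)
      = ((Finset.Icc (1:ℤ) Lx).filter fun x => 1 ≤ x + d.1 ∧ x + d.1 ≤ Lx) ×ˢ
        ((Finset.Icc (1:ℤ) Ly).filter fun y => 1 ≤ y + d.2 ∧ y + d.2 ≤ Ly) := by
    ext p
    simp only [mem_filter, mem_product, mem_sites, Finset.mem_Icc, Prod.fst_add,
      Prod.snd_add]
    tauto
  rw [hsplit, card_product, card1d, card1d]

lemma card_O_eq {Lx Ly : ℤ} (hx : 1 ≤ Lx) (hy : 1 ≤ Ly) (m : ℤ) :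
    ((O Lx Ly m).card : ℤ)
      = ∑ d ∈ diffs Lx Ly, (if |d.1| + |d.2| = m then (Lx - |d.1|) * (Ly - |d.2|) else 0) := by
  classical
  have H : ∀ pq ∈ O Lx Ly m, pq.2 - pq.1 ∈ (diffs Lx Ly).filter fun d => |d.1| + |d.2| = m := by
    intro pq hpq
    rw [O, mem_filter, mem_product, mem_sites, mem_sites] at hpq
    obtain ⟨⟨h1, h2⟩, ht⟩ := hpq
    rw [mem_filter, diffs, Finset.mem_Icc, Prod.le_def, Prod.le_def]
    constructor
    · constructor <;> constructor <;> simp only [Prod.fst_sub, Prod.snd_sub] <;> omega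
    · rw [taxi] at ht
      simp only [Prod.fst_sub, Prod.snd_sub]
      rw [abs_sub_comm pq.2.1 pq.1.1, abs_sub_comm pq.2.2 pq.1.2]
      exact ht
  rw [Finset.card_eq_sum_card_fiberwise H]
  rw [Finset.sum_filter]
  push_cast
  refine sum_congr rfl fun d hd => ?_
  rw [diffs, Finset.mem_Icc, Prod.le_def, Prod.le_def] at hd
  dsimp only at hd
  obtain ⟨⟨hd1, hd2⟩, hd3, hd4⟩ := hd
  by_cases hdm : |d.1| + |d.2| = m
  · rw [if_pos hdm, if_pos hdm]
    have hfib : (O Lx Ly m).filter (fun pq => pq.2 - pq.1 = d)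
        = (sites Lx Ly ×ˢ sites Lx Ly).filter fun pq => pq.2 - pq.1 = d := by
      rw [O, filter_filter]
      refine filter_congr fun pq hpq => ?_
      constructor
      · exact fun h => h.2
      · intro h
        refine ⟨?_, h⟩
        rw [taxi, ← hdm, ← h]
        simp only [Prod.fst_sub, Prod.snd_sub]
        rw [abs_sub_comm pq.2.1 pq.1.1, abs_sub_comm pq.2.2 pq.1.2]
    rw [hfib, fiber_card]
    have ha : (0:ℤ) ≤ Lx - |d.1| := by
      have := abs_le.mpr ⟨show -(Lx-1) ≤ d.1 by omega, hd3⟩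
      omega
    have hb : (0:ℤ) ≤ Ly - |d.2| := by
      have := abs_le.mpr ⟨show -(Ly-1) ≤ d.2 by omega, hd4⟩
      omega
    push_cast [Int.toNat_of_nonneg ha, Int.toNat_of_nonneg hb]
    try ring
  · rw [if_neg hdm, if_neg hdm]

lemma card_O (Lx Ly m : ℤ) (hm : m ≠ 0) : (O Lx Ly m).card = 2 * pairCount Lx Ly m := by
  classical
  set P := ((sites Lx Ly).powersetCard 2).filter
    (fun s => ∃ p ∈ s, ∃ q ∈ s, p ≠ q ∧ taxi p q = m) with hP
  have hne : ∀ pq : (ℤ×ℤ)×(ℤ×ℤ), taxi pq.1 pq.2 = m → pq.1 ≠ pq.2 := by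
    intro pq ht he
    rw [he, taxi_self] at ht; exact hm ht.symm
  have H : ∀ pq ∈ O Lx Ly m, ({pq.1, pq.2} : Finset (ℤ×ℤ)) ∈ P := by
    intro pq hpq
    rw [O, mem_filter, mem_product] at hpq
    obtain ⟨⟨h1, h2⟩, ht⟩ := hpq
    have hne' := hne pq ht
    rw [hP, mem_filter, mem_powersetCard]
    refine ⟨⟨?_, ?_⟩, pq.1, by simp, pq.2, by simp, hne', ht⟩
    · intro x hx; simp at hx; rcases hx with h | h <;> subst h <;> assumption
    · exact card_pair hne'
  rw [card_eq_sum_card_fiberwise H]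
  rw [show 2 * pairCount Lx Ly m = ∑ _s ∈ P, 2 by
    rw [sum_const, smul_eq_mul, pairCount, mul_comm]]
  refine sum_congr rfl fun s hs => ?_
  rw [hP, mem_filter, mem_powersetCard] at hs
  obtain ⟨⟨hsub, hcard⟩, p, hp, q, hq, hpq, ht⟩ := hs
  have hseq : s = {p, q} := by
    refine (eq_of_subset_of_card_le ?_ ?_).symm
    · intro x hx; simp at hx; rcases hx with h | h <;> subst h <;> assumption
    · rw [hcard, card_pair hpq]
  have : (O Lx Ly m).filter (fun pq' => ({pq'.1, pq'.2} : Finset (ℤ×ℤ)) = s)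
      = {(p, q), (q, p)} := by
    ext z
    simp only [mem_filter, O, mem_product, mem_insert, mem_singleton]
    constructor
    · rintro ⟨⟨_, hz⟩, hset⟩
      have hzne : z.1 ≠ z.2 := hne z hz
      rw [hseq] at hset
      have h1 : z.1 = p ∨ z.1 = q := by
        have : z.1 ∈ ({p, q} : Finset (ℤ×ℤ)) := by rw [← hset]; simp
        simpa using this
      have h2 : z.2 = p ∨ z.2 = q := by
        have : z.2 ∈ ({p, q} : Finset (ℤ×ℤ)) := by rw [← hset]; simp
        simpa using this
      have h3 : p = z.1 ∨ p = z.2 := by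
        have : p ∈ ({z.1, z.2} : Finset (ℤ×ℤ)) := by rw [hset]; simp
        simpa using this
      have h4 : q = z.1 ∨ q = z.2 := by
        have : q ∈ ({z.1, z.2} : Finset (ℤ×ℤ)) := by rw [hset]; simp
        simpa using this
      rcases h1 with h1 | h1 <;> rcases h2 with h2 | h2
      · exact absurd (h1.trans h2.symm) hzne
      · left; exact Prod.ext h1 h2
      · right; exact Prod.ext h1 h2
      · exact absurd (h1.trans h2.symm) hzne
    · have hps := hsub hp
      have hqs := hsub hq
      rintro (h | h) <;> subst h
      · exact ⟨⟨⟨hps, hqs⟩, ht⟩, hseq.symm⟩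
      · exact ⟨⟨⟨hqs, hps⟩, (taxi_comm q p).trans ht⟩, by rw [hseq, pair_comm]⟩
  rw [this, card_insert_of_notMem (by intro h; rw [mem_singleton, Prod.mk.injEq] at h; exact hpq h.1),
    card_singleton]

def G (Lx Ly m x : ℤ) : ℤ :=
  if 1 ≤ m - |x| ∧ m - |x| ≤ Ly - 1 then 2*(Lx-|x|)*(Ly-(m-|x|))
  else if m - |x| = 0 then (Lx-|x|)*Ly else 0

lemma sumT (Ly b C : ℤ) (hy : 2 ≤ Ly) :
    ∑ y ∈ Finset.Icc (1-Ly) (Ly-1), (if |y| = b then C*(Ly-|y|) else 0)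
      = if 1 ≤ b ∧ b ≤ Ly - 1 then 2*C*(Ly-b) else if b = 0 then C*Ly else 0 := by
  rcases lt_trichotomy b 0 with hb | hb | hb
  · rw [if_neg (by omega), if_neg (by omega)]
    refine Finset.sum_eq_zero fun y _ => ?_
    rw [if_neg]
    intro h
    have := abs_nonneg y
    omega
  · subst hb
    rw [if_neg (by omega), if_pos rfl]
    rw [Finset.sum_eq_single_of_mem 0 (by rw [Finset.mem_Icc]; omega)]
    · simp
    · intro y _ hy0
      rw [if_neg (by simpa using hy0)]
  · rcases le_or_gt b (Ly - 1) with hb2 | hb2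
    · rw [if_pos ⟨hb, hb2⟩]
      rw [← Finset.sum_filter]
      have hfilt : (Finset.Icc (1-Ly) (Ly-1)).filter (fun y => |y| = b) = {b, -b} := by
        ext y
        simp only [Finset.mem_filter, Finset.mem_Icc, Finset.mem_insert,
          Finset.mem_singleton, abs_eq (by omega : (0:ℤ) ≤ b)]
        omega
      rw [hfilt, Finset.sum_pair (by omega : b ≠ -b), abs_of_nonneg (by omega : (0:ℤ) ≤ b),
        abs_neg, abs_of_nonneg (by omega : (0:ℤ) ≤ b)]
      ring
    · rw [if_neg (by omega), if_neg (by omega)]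
      refine Finset.sum_eq_zero fun y hy' => ?_
      rw [Finset.mem_Icc] at hy'
      have : |y| ≤ Ly - 1 := abs_le.mpr ⟨by omega, by omega⟩
      rw [if_neg (by omega)]

lemma sum_G (Lx Ly m : ℤ) (hy : 2 ≤ Ly) :
    ∑ d ∈ Finset.Icc ((1-Lx, 1-Ly) : ℤ×ℤ) (Lx-1, Ly-1),
      (if |d.1| + |d.2| = m then (Lx - |d.1|) * (Ly - |d.2|) else 0)
    = ∑ x ∈ Finset.Icc (1-Lx) (Lx-1), G Lx Ly m x := by
  rw [Finset.Icc_prod_def, Finset.sum_product]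
  refine Finset.sum_congr rfl fun x _ => ?_
  have h1 : ∀ y : ℤ, (if |x| + |y| = m then (Lx - |x|) * (Ly - |y|) else 0)
      = (if |y| = m - |x| then (Lx - |x|) * (Ly - |y|) else 0) := by
    intro y
    by_cases h : |x| + |y| = m
    · rw [if_pos h, if_pos (by omega)]
    · rw [if_neg h, if_neg (by omega)]
  calc ∑ y ∈ Finset.Icc (1-Ly) (Ly-1), (if |x| + |y| = m then (Lx - |x|) * (Ly - |y|) else 0)
      = ∑ y ∈ Finset.Icc (1-Ly) (Ly-1), (if |y| = m - |x| then (Lx - |x|) * (Ly - |y|) else 0) :=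
        Finset.sum_congr rfl fun y _ => h1 y
    _ = G Lx Ly m x := by
        rw [sumT Ly (m - |x|) (Lx - |x|) hy, G]

lemma tent_aux (n : ℕ) :
    ∑ x ∈ Finset.Icc (-(n:ℤ)) (n:ℤ), ((n:ℤ) + 1 - |x|) = ((n:ℤ)+1)^2 := by
  induction n with
  | zero => simp
  | succ k ih =>
    have hins : Finset.Icc (-(k+1:ℤ)) (k+1:ℤ)
        = insert (-(k+1:ℤ)) (insert ((k+1:ℤ)) (Finset.Icc (-(k:ℤ)) (k:ℤ))) := by
      ext y
      simp only [Finset.mem_insert, Finset.mem_Icc]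
      omega
    push_cast at hins ⊢
    rw [hins, Finset.sum_insert (by simp only [Finset.mem_insert, Finset.mem_Icc]; push_cast; omega),
      Finset.sum_insert (by simp only [Finset.mem_Icc]; push_cast; omega)]
    have habs : |(-((k:ℤ)+1))| = (k:ℤ)+1 := by rw [abs_neg]; exact abs_of_nonneg (by positivity)
    have habs2 : |((k:ℤ)+1)| = (k:ℤ)+1 := abs_of_nonneg (by positivity)
    rw [habs, habs2]
    have hsum : ∑ x ∈ Finset.Icc (-(k:ℤ)) (k:ℤ), ((k:ℤ) + 1 + 1 - |x|)
        = ∑ x ∈ Finset.Icc (-(k:ℤ)) (k:ℤ), (((k:ℤ) + 1 - |x|) + 1) :=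
      Finset.sum_congr rfl fun x _ => by ring
    rw [hsum, Finset.sum_add_distrib, ih, Finset.sum_const, Int.card_Icc]
    have hcard : ((k:ℤ) + 1 - -(k:ℤ)).toNat = 2*k+1 := by omega
    rw [hcard]
    push_cast
    ring

lemma sum_tent {Lx : ℤ} (hx : 1 ≤ Lx) :
    ∑ x ∈ Finset.Icc (1-Lx) (Lx-1), (Lx - |x|) = Lx^2 := by
  have hn : ((Lx - 1).toNat : ℤ) = Lx - 1 := Int.toNat_of_nonneg (by omega)
  have := tent_aux (Lx - 1).toNat
  rw [hn] at this
  have hset : Finset.Icc (1-Lx) (Lx-1) = Finset.Icc (-(Lx-1)) (Lx-1) := by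
    congr 1; omega
  rw [hset]
  calc ∑ x ∈ Finset.Icc (-(Lx-1)) (Lx-1), (Lx - |x|)
      = ∑ x ∈ Finset.Icc (-(Lx-1)) (Lx-1), ((Lx - 1) + 1 - |x|) :=
        Finset.sum_congr rfl fun x _ => by ring
    _ = ((Lx - 1) + 1)^2 := this
    _ = Lx^2 := by ring

lemma mul_nn {a b : ℤ} (ha : 0 ≤ a) (hb : 0 ≤ b) : 0 ≤ a * b := mul_nonneg ha hb

lemma step_le {Lx Ly m : ℤ} (hx : 2 ≤ Lx) (hy : 2 ≤ Ly) (hm : Lx ≤ m) :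
    ∀ x ∈ Finset.Icc (1-Lx) (Lx-1), G Lx Ly (m+1) x ≤ G Lx Ly m x := by
  intro x hxm
  rw [Finset.mem_Icc] at hxm
  have habs : |x| ≤ Lx - 1 := abs_le.mpr ⟨by omega, by omega⟩
  have h0 : (0:ℤ) ≤ |x| := abs_nonneg x
  have hC : (1:ℤ) ≤ Lx - |x| := by omega
  have hb : 1 ≤ m - |x| := by omega
  rw [G, G]
  rcases le_or_gt (m + 1 - |x|) (Ly - 1) with hcase | hcase
  · rw [if_pos ⟨by omega, hcase⟩, if_pos ⟨by omega, by omega⟩]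
    have h2 : (0:ℤ) ≤ 2*(Lx-|x|) := by omega
    nlinarith
  · rw [if_neg (by omega), if_neg (by omega)]
    by_cases h : m - |x| ≤ Ly - 1
    · rw [if_pos ⟨hb, h⟩]
      exact mul_nn (by omega) (by omega)
    · rw [if_neg (by omega), if_neg (by omega)]

lemma step_eq {Lx Ly m : ℤ} (hx : 2 ≤ Lx) (hm : Lx ≤ m) (hm2 : m ≤ Ly - 1) :
    ∀ x ∈ Finset.Icc (1-Lx) (Lx-1), G Lx Ly m x - G Lx Ly (m+1) x = 2*(Lx - |x|) := by
  intro x hxm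
  rw [Finset.mem_Icc] at hxm
  have habs : |x| ≤ Lx - 1 := abs_le.mpr ⟨by omega, by omega⟩
  have h0 : (0:ℤ) ≤ |x| := abs_nonneg x
  have hC : (1:ℤ) ≤ Lx - |x| := by omega
  have hb : 1 ≤ m - |x| := by omega
  have hb2 : m - |x| ≤ Ly - 1 := by omega
  rw [G, G, if_pos ⟨hb, hb2⟩]
  rcases le_or_gt (m + 1 - |x|) (Ly - 1) with hcase | hcase
  · rw [if_pos ⟨by omega, hcase⟩]; ring
  · rw [if_neg (by omega), if_neg (by omega)]
    have : m - |x| = Ly - 1 := by omega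
    rw [this]; ring

lemma step_strict {Lx Ly m : ℤ} (hx : 2 ≤ Lx) (hm : Lx ≤ m) (hm2 : m ≤ Lx + Ly - 3) :
    G Lx Ly (m+1) (Lx-1) < G Lx Ly m (Lx-1) := by
  have habs : |Lx - 1| = Lx - 1 := abs_of_nonneg (by omega)
  rw [G, G, habs]
  rw [if_pos ⟨by omega, by omega⟩, if_pos ⟨by omega, by omega⟩]
  have h1 : Lx - (Lx - 1) = 1 := by ring
  rw [h1]
  nlinarith [hm2]



lemma mem_O {Lx Ly m : ℤ} {pq : (ℤ×ℤ)×(ℤ×ℤ)} :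
    pq ∈ O Lx Ly m ↔ (((1 ≤ pq.1.1 ∧ pq.1.1 ≤ Lx) ∧ 1 ≤ pq.1.2 ∧ pq.1.2 ≤ Ly) ∧
      ((1 ≤ pq.2.1 ∧ pq.2.1 ≤ Lx) ∧ 1 ≤ pq.2.2 ∧ pq.2.2 ≤ Ly)) ∧
      |pq.1.1 - pq.2.1| + |pq.1.2 - pq.2.2| = m := by
  rw [O, mem_filter, mem_product, mem_sites, mem_sites, taxi]

lemma card_O_symm (Lx Ly m : ℤ) : (O Lx Ly m).card = (O Ly Lx m).card := by
  refine Finset.card_bij' (fun pq _ => (Prod.swap pq.1, Prod.swap pq.2))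
    (fun pq _ => (Prod.swap pq.1, Prod.swap pq.2)) ?_ ?_ ?_ ?_
  · intro pq hpq
    rw [mem_O] at hpq ⊢
    simp only [Prod.fst_swap, Prod.snd_swap]
    exact ⟨⟨⟨hpq.1.1.2, hpq.1.1.1⟩, hpq.1.2.2, hpq.1.2.1⟩, by omega⟩
  · intro pq hpq
    rw [mem_O] at hpq ⊢
    simp only [Prod.fst_swap, Prod.snd_swap]
    exact ⟨⟨⟨hpq.1.1.2, hpq.1.1.1⟩, hpq.1.2.2, hpq.1.2.1⟩, by omega⟩
  · intro pq _; simp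
  · intro pq _; simp

lemma sum_G_of_O {Lx Ly : ℤ} (hx : 2 ≤ Lx) (hy : 2 ≤ Ly) (m : ℤ) :
    ((O Lx Ly m).card : ℤ) = ∑ x ∈ Finset.Icc (1-Lx) (Lx-1), G Lx Ly m x := by
  rw [card_O_eq (by omega) (by omega) m]
  exact sum_G Lx Ly m hy

lemma key_eq {Lx Ly m : ℤ} (hx : 2 ≤ Lx) (hxy : Lx ≤ Ly) (hm : Lx ≤ m) (hm2 : m ≤ Ly - 1) :
    (pairCount Lx Ly (m+1) : ℤ) = (pairCount Lx Ly m : ℤ) - Lx^2 := by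
  have hy : 2 ≤ Ly := le_trans hx hxy
  have h1 := card_O Lx Ly m (by omega)
  have h2 := card_O Lx Ly (m+1) (by omega)
  have ediff : ((O Lx Ly m).card : ℤ) - ((O Lx Ly (m+1)).card : ℤ) = 2 * Lx^2 := by
    rw [sum_G_of_O hx hy m, sum_G_of_O hx hy (m+1), ← Finset.sum_sub_distrib,
      Finset.sum_congr rfl (step_eq hx hm hm2), ← Finset.mul_sum, sum_tent (by omega)]
  rw [h1, h2] at ediff
  push_cast at ediff
  linarith

lemma key_lt {Lx Ly m : ℤ} (hx : 2 ≤ Lx) (hxy : Lx ≤ Ly) (hm : Lx ≤ m)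
    (hm2 : m + 1 ≤ Lx + Ly - 2) :
    pairCount Lx Ly (m+1) < pairCount Lx Ly m := by
  have hy : 2 ≤ Ly := le_trans hx hxy
  have hsum : ∑ x ∈ Finset.Icc (1-Lx) (Lx-1), G Lx Ly (m+1) x
      < ∑ x ∈ Finset.Icc (1-Lx) (Lx-1), G Lx Ly m x := by
    refine Finset.sum_lt_sum (step_le hx hy hm) ⟨Lx - 1, ?_, step_strict hx hm (by omega)⟩
    rw [Finset.mem_Icc]; omega
  rw [← sum_G_of_O hx hy m, ← sum_G_of_O hx hy (m+1)] at hsum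
  have hlt : (O Lx Ly (m+1)).card < (O Lx Ly m).card := by exact_mod_cast hsum
  rw [card_O Lx Ly m (by omega), card_O Lx Ly (m+1) (by omega)] at hlt
  omega

lemma chain {pc : ℤ → ℕ} {lo top : ℤ}
    (step : ∀ k, lo ≤ k → k + 1 ≤ top → pc (k+1) < pc k) :
    ∀ m m', lo ≤ m → m < m' → m' ≤ top → pc m' < pc m := by
  intro m m' hm hlt htop
  have H : ∀ j : ℕ, ∀ n : ℤ, lo ≤ m → n = m + 1 + j → n ≤ top → pc n < pc m := by
    intro j
    induction j with
    | zero =>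
      intro n hlo hn ht
      have : n = m + 1 := by omega
      subst this
      exact step m hlo ht
    | succ i ih =>
      intro n hlo hn ht
      have h1 : pc (m + 1 + i) < pc m := ih (m + 1 + i) hlo rfl (by omega)
      have h2 : pc (m + 1 + i + 1) < pc (m + 1 + i) := step (m + 1 + i) (by omega) (by omega)
      have : n = m + 1 + i + 1 := by omega
      subst this
      exact lt_trans h2 h1
  exact H (m' - (m + 1)).toNat m' hm (by omega) htop

lemma pc_symm {Lx Ly : ℤ} (m : ℤ) (hm : m ≠ 0) :
    pairCount Lx Ly m = pairCount Ly Lx m := by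
  have h1 := card_O Lx Ly m hm
  have h2 := card_O Ly Lx m hm
  have h3 := card_O_symm Lx Ly m
  omega

end Stmt3Aux

open Stmt3Aux in
theorem stmt3 (Lx Ly : ℤ) (hLx : 2 ≤ Lx) (hLy : 2 ≤ Ly) :
    (∀ m m' : ℤ, min Lx Ly ≤ m → m < m' → m' ≤ Lx + Ly - 2 →
      pairCount Lx Ly m' < pairCount Lx Ly m) ∧
    (∀ m : ℤ, min Lx Ly ≤ m → m < max Lx Ly →
      (pairCount Lx Ly (m + 1) : ℤ) = (pairCount Lx Ly m : ℤ) - (min Lx Ly) ^ 2) := by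
  rcases le_total Lx Ly with hc | hc
  · simp only [min_eq_left hc, max_eq_right hc]
    constructor
    · exact chain (fun k hk hk' => key_lt hLx hc hk hk')
    · intro m hm hm'
      exact key_eq hLx hc hm (by omega)
  · simp only [min_eq_right hc, max_eq_left hc]
    constructor
    · intro m m' h1 h2 h3
      rw [pc_symm m (by omega), pc_symm m' (by omega)]
      exact chain (top := Lx + Ly - 2)
        (fun k hk hk' => key_lt hLy hc hk (by omega)) m m' h1 h2 h3
    · intro m hm hm'
      rw [pc_symm m (by omega), pc_symm (m+1) (by omega)]
      exact key_eq hLy hc hm (by omega)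
end

section
/- Consider a one-dimensional lattice of $X$ sites $\{1, \dots, X\}$ containing a contiguous block of $n$ inaccessible sites, with $n < X - 1$ and at least one accessible site on each side of the block. The number of unordered pairs of accessible sites $(i, j)$ with $i$ left of the block and $j$ right of the block and $j - i = m$ equals $\min\big(-|m - \frac{X+n}{2}| + \frac{X-n}{2},\ d\big)$ whenever this quantity is nonnegative, where $d = \min(a, b)$ and $a$ and $b$ are the numbers of accessible sites to the left and right of the block, respectively. -/
/-- Number of unordered cross-block pairs of accessible sites `{i, j}` with
`i` strictly left of the inaccessible block `{p, …, p+n-1}`, `j` strictly right of it,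
and `j - i = m`, in the one-dimensional lattice `{1, …, X}`. -/
noncomputable def crossCount (X p n m : ℤ) : ℕ :=
  (((Finset.Icc 1 (p - 1)) ×ˢ (Finset.Icc (p + n) X)).filter
    (fun q => q.2 - q.1 = m)).card

theorem stmt7 (X p n m : ℤ) (hn : 1 ≤ n) (hnX : n < X - 1)
    (hp : 2 ≤ p) (hpX : p + n - 1 ≤ X - 1)
    (hpos : (0 : ℚ) ≤ min (-|(m : ℚ) - (X + n) / 2| + (X - n) / 2)
      ((min (p - 1) (X - (p + n - 1)) : ℤ) : ℚ)) :
    (crossCount X p n m : ℚ) =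
      min (-|(m : ℚ) - (X + n) / 2| + (X - n) / 2)
        ((min (p - 1) (X - (p + n - 1)) : ℤ) : ℚ) := by
  set K : ℤ := min (min (m - n) (X - m)) (min (p - 1) (X - (p + n - 1))) with hKdef
  have hA : (-|(m : ℚ) - (X + n) / 2| + (X - n) / 2) = ((min (m - n) (X - m) : ℤ) : ℚ) := by
    rcases le_total (m - n : ℤ) (X - m) with h | h
    · have h' : (m : ℚ) - n ≤ X - m := by exact_mod_cast h
      rw [min_eq_left h, abs_of_nonpos (by linarith)]
      push_cast; ring
    · have h' : (X : ℚ) - m ≤ m - n := by exact_mod_cast h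
      rw [min_eq_right h, abs_of_nonneg (by linarith)]
      push_cast; ring
  have hRHS : min (-|(m : ℚ) - (X + n) / 2| + (X - n) / 2)
      ((min (p - 1) (X - (p + n - 1)) : ℤ) : ℚ) = (K : ℚ) := by
    rw [hA, hKdef]
    norm_cast
  have hKpos : 0 ≤ K := by
    rw [hRHS] at hpos; exact_mod_cast hpos
  have hcard : crossCount X p n m = K.toNat := by
    unfold crossCount
    have himg : (((Finset.Icc 1 (p - 1)) ×ˢ (Finset.Icc (p + n) X)).filter
        (fun q => q.2 - q.1 = m)) =
        (Finset.Icc (max 1 (p + n - m)) (min (p - 1) (X - m))).image (fun i => (i, i + m)) := by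
      ext ⟨i, j⟩
      simp only [Finset.mem_filter, Finset.mem_product, Finset.mem_Icc, Finset.mem_image,
        Prod.mk.injEq, le_min_iff, max_le_iff]
      constructor
      · rintro ⟨⟨⟨h1, h2⟩, h3, h4⟩, h5⟩
        exact ⟨i, ⟨by omega, by omega⟩, rfl, by omega⟩
      · rintro ⟨x, ⟨hx1, hx2⟩, rfl, rfl⟩
        refine ⟨⟨⟨by omega, by omega⟩, by omega, by omega⟩, by omega⟩
    rw [himg, Finset.card_image_of_injective _ (fun a b h => by
      simpa using congrArg Prod.fst h), Int.card_Icc]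
    congr 1
    omega
  rw [hcard, hRHS]
  exact_mod_cast Int.toNat_of_nonneg hKpos
end

section
/- In an $L_x \times L_y$ rectangular lattice, for a fixed site $(H_x, H_y)$, the number of sites at taxicab distance exactly $m$ from it equals $4m - \alpha(m)$, where $\alpha(m) = \sum_{i} N_i(m) + \sum_{j,k} M_{j,k}(m)$ with $N_i(m) = 1$ if $m \ge b_i$ and $0$ otherwise (for the four boundary distances $b_L = H_x$, $b_R = L_x - H_x + 1$, $b_D = H_y$, $b_U = L_y - H_y + 1$), and $M_{j,k}(m)$ given by: $0$ if $m \le \min(b_j,b_k)$; $m - \min(b_j,b_k)$ if $\min(b_j,b_k) < m \le \max(b_j,b_k)$; $2m - c_{j,k}$ if $\max(b_j,b_k) < m \le c_{j,k}-2$; and $m-1$ if $m > c_{j,k}-2$, where $c_{j,k} = b_j + b_k$ for the four corner combinations $j \in \{D,U\}$, $k \in \{L,R\}$. -/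
/-- Boundary out-of-domain count: `N_i(m) = 1` if `m ≥ b_i`, else `0`. -/
def Nfun (b m : ℤ) : ℤ := if b ≤ m then 1 else 0

/-- Corner out-of-domain count `M_{j,k}(m)` for boundary distances `bj, bk`. -/
def Mfun (bj bk m : ℤ) : ℤ :=
  if m ≤ min bj bk then 0
  else if m ≤ max bj bk then m - min bj bk
  else if m ≤ bj + bk - 2 then 2 * m - (bj + bk)
  else m - 1

/-- Total number of out-of-domain pairs at distance `m` for a site with boundary
distances `bL = Hx`, `bR = Lx - Hx + 1`, `bD = Hy`, `bU = Ly - Hy + 1`. -/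
def alphaFun (Lx Ly Hx Hy m : ℤ) : ℤ :=
  Nfun Hx m + Nfun (Lx - Hx + 1) m + Nfun Hy m + Nfun (Ly - Hy + 1) m +
    Mfun Hy Hx m + Mfun Hy (Lx - Hx + 1) m +
    Mfun (Ly - Hy + 1) Hx m + Mfun (Ly - Hy + 1) (Lx - Hx + 1) m

lemma Nfun_eq (b m : ℤ) : Nfun b m = min 1 (max 0 (m - b + 1)) := by
  unfold Nfun; split_ifs <;> omega

lemma Mfun_eq (bj bk m : ℤ) (hj : 1 ≤ bj) (hk : 1 ≤ bk) (hm : 1 ≤ m) :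
    Mfun bj bk m = max 0 (m - bj) + max 0 (m - bk) - max 0 (m - bj - bk + 1) := by
  unfold Mfun; split_ifs <;> omega

lemma cardIccZ (a b : ℤ) : ((Finset.Icc a b).card : ℤ) = max 0 (b + 1 - a) := by
  rw [Int.card_Icc]; omega

set_option maxHeartbeats 1600000 in
theorem stmt9 (Lx Ly Hx Hy m : ℤ) (hHx1 : 1 ≤ Hx) (hHx2 : Hx ≤ Lx)
    (hHy1 : 1 ≤ Hy) (hHy2 : Hy ≤ Ly) (hm : 1 ≤ m) :
    (((sites Lx Ly).filter (fun p => taxi p (Hx, Hy) = m)).card : ℤ) =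
      4 * m - alphaFun Lx Ly Hx Hy m := by
  classical
  set S := (sites Lx Ly).filter (fun p => taxi p (Hx, Hy) = m) with hS
  have memS : ∀ p : ℤ × ℤ, p ∈ S ↔
      1 ≤ p.1 ∧ p.1 ≤ Lx ∧ 1 ≤ p.2 ∧ p.2 ≤ Ly ∧
        ((p.1 - Hx).natAbs : ℤ) + ((p.2 - Hy).natAbs : ℤ) = m := by
    intro p
    simp only [hS, Finset.mem_filter, sites, Finset.mem_Icc, Prod.le_def, taxi,
      Int.abs_eq_natAbs]
    constructor
    · rintro ⟨⟨⟨h1, h2⟩, ⟨h3, h4⟩⟩, h5⟩; exact ⟨h1, h3, h2, h4, h5⟩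
    · rintro ⟨h1, h2, h3, h4, h5⟩; exact ⟨⟨⟨h1, h3⟩, ⟨h2, h4⟩⟩, h5⟩
  set A := S.filter (fun p => p.2 = Hy) with hA
  set B := S.filter (fun p => ¬ p.2 = Hy) with hB
  set A1 := A.filter (fun p => p.1 < Hx) with hA1
  set A2 := A.filter (fun p => ¬ p.1 < Hx) with hA2
  set B1 := B.filter (fun p => p.1 = Hx) with hB1
  set B2 := B.filter (fun p => ¬ p.1 = Hx) with hB2
  set B1a := B1.filter (fun p => p.2 < Hy) with hB1a
  set B1b := B1.filter (fun p => ¬ p.2 < Hy) with hB1b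
  set B2a := B2.filter (fun p => p.1 < Hx) with hB2a
  set B2b := B2.filter (fun p => ¬ p.1 < Hx) with hB2b
  set B2a1 := B2a.filter (fun p => p.2 < Hy) with hB2a1
  set B2a2 := B2a.filter (fun p => ¬ p.2 < Hy) with hB2a2
  set B2b1 := B2b.filter (fun p => p.2 < Hy) with hB2b1
  set B2b2 := B2b.filter (fun p => ¬ p.2 < Hy) with hB2b2
  have s0 : A.card + B.card = S.card :=
    Finset.card_filter_add_card_filter_not _
  have s1 : A1.card + A2.card = A.card :=
    Finset.card_filter_add_card_filter_not _
  have s2 : B1.card + B2.card = B.card :=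
    Finset.card_filter_add_card_filter_not _
  have s3 : B1a.card + B1b.card = B1.card :=
    Finset.card_filter_add_card_filter_not _
  have s4 : B2a.card + B2b.card = B2.card :=
    Finset.card_filter_add_card_filter_not _
  have s5 : B2a1.card + B2a2.card = B2a.card :=
    Finset.card_filter_add_card_filter_not _
  have s6 : B2b1.card + B2b2.card = B2b.card :=
    Finset.card_filter_add_card_filter_not _
  -- A1 : left horizontal axis point
  have cA1 : A1.card = (Finset.Icc (max 1 (Hx - m)) (Hx - m)).card := by
    apply Finset.card_nbij' (i := fun p => p.1) (j := fun x => (x, Hy))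
    · intro p hp
      simp only [hA1, hA, Finset.mem_coe, Finset.mem_filter, and_true, true_and, memS, Finset.mem_Icc] at hp ⊢
      omega
    · intro x hx
      simp only [Finset.mem_coe, Finset.mem_Icc] at hx
      simp only [hA1, hA, Finset.mem_coe, Finset.mem_filter, and_true, true_and, memS]
      omega
    · intro p hp
      obtain ⟨x, y⟩ := p
      simp only [hA1, hA, Finset.mem_coe, Finset.mem_filter, and_true, true_and, memS] at hp
      simp only [Prod.mk.injEq, true_and, and_true]
      omega
    · intro x _; rfl
  -- A2 : right horizontal axis point
  have cA2 : A2.card = (Finset.Icc (Hx + m) (min Lx (Hx + m))).card := by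
    apply Finset.card_nbij' (i := fun p => p.1) (j := fun x => (x, Hy))
    · intro p hp
      simp only [hA2, hA, Finset.mem_coe, Finset.mem_filter, and_true, true_and, memS, Finset.mem_Icc] at hp ⊢
      omega
    · intro x hx
      simp only [Finset.mem_coe, Finset.mem_Icc] at hx
      simp only [hA2, hA, Finset.mem_coe, Finset.mem_filter, and_true, true_and, memS]
      omega
    · intro p hp
      obtain ⟨x, y⟩ := p
      simp only [hA2, hA, Finset.mem_coe, Finset.mem_filter, and_true, true_and, memS] at hp
      simp only [Prod.mk.injEq, true_and, and_true]
      omega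
    · intro x _; rfl
  -- B1a : bottom vertical axis point
  have cB1a : B1a.card = (Finset.Icc (max 1 (Hy - m)) (Hy - m)).card := by
    apply Finset.card_nbij' (i := fun p => p.2) (j := fun y => (Hx, y))
    · intro p hp
      simp only [hB1a, hB1, hB, Finset.mem_coe, Finset.mem_filter, and_true, true_and, memS, Finset.mem_Icc] at hp ⊢
      omega
    · intro y hy
      simp only [Finset.mem_coe, Finset.mem_Icc] at hy
      simp only [hB1a, hB1, hB, Finset.mem_coe, Finset.mem_filter, and_true, true_and, memS]
      omega
    · intro p hp
      obtain ⟨x, y⟩ := p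
      simp only [hB1a, hB1, hB, Finset.mem_coe, Finset.mem_filter, and_true, true_and, memS] at hp
      simp only [Prod.mk.injEq, true_and, and_true]
      omega
    · intro y _; rfl
  -- B1b : top vertical axis point
  have cB1b : B1b.card = (Finset.Icc (Hy + m) (min Ly (Hy + m))).card := by
    apply Finset.card_nbij' (i := fun p => p.2) (j := fun y => (Hx, y))
    · intro p hp
      simp only [hB1b, hB1, hB, Finset.mem_coe, Finset.mem_filter, and_true, true_and, memS, Finset.mem_Icc] at hp ⊢
      omega
    · intro y hy
      simp only [Finset.mem_coe, Finset.mem_Icc] at hy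
      simp only [hB1b, hB1, hB, Finset.mem_coe, Finset.mem_filter, and_true, true_and, memS]
      omega
    · intro p hp
      obtain ⟨x, y⟩ := p
      simp only [hB1b, hB1, hB, Finset.mem_coe, Finset.mem_filter, and_true, true_and, memS] at hp
      simp only [Prod.mk.injEq, true_and, and_true]
      omega
    · intro y _; rfl
  -- B2a1 : quadrant x < Hx, y < Hy
  have cB2a1 : B2a1.card =
      (Finset.Icc (max 1 (Hx - m + 1)) (min (Hx - 1) (Hx + Hy - m - 1))).card := by
    apply Finset.card_nbij' (i := fun p => p.1) (j := fun x => (x, Hx + Hy - m - x))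
    · intro p hp
      simp only [hB2a1, hB2a, hB2, hB, Finset.mem_coe, Finset.mem_filter, and_true, true_and, memS, Finset.mem_Icc] at hp ⊢
      omega
    · intro x hx
      simp only [Finset.mem_coe, Finset.mem_Icc] at hx
      simp only [hB2a1, hB2a, hB2, hB, Finset.mem_coe, Finset.mem_filter, and_true, true_and, memS]
      omega
    · intro p hp
      obtain ⟨x, y⟩ := p
      simp only [hB2a1, hB2a, hB2, hB, Finset.mem_coe, Finset.mem_filter, and_true, true_and, memS] at hp
      simp only [Prod.mk.injEq, true_and, and_true]
      omega
    · intro x _; rfl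
  -- B2a2 : quadrant x < Hx, y > Hy
  have cB2a2 : B2a2.card =
      (Finset.Icc (max 1 (Hx - m + 1)) (min (Hx - 1) (Hx + Ly - Hy - m))).card := by
    apply Finset.card_nbij' (i := fun p => p.1) (j := fun x => (x, Hy + m - Hx + x))
    · intro p hp
      simp only [hB2a2, hB2a, hB2, hB, Finset.mem_coe, Finset.mem_filter, and_true, true_and, memS, Finset.mem_Icc] at hp ⊢
      omega
    · intro x hx
      simp only [Finset.mem_coe, Finset.mem_Icc] at hx
      simp only [hB2a2, hB2a, hB2, hB, Finset.mem_coe, Finset.mem_filter, and_true, true_and, memS]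
      omega
    · intro p hp
      obtain ⟨x, y⟩ := p
      simp only [hB2a2, hB2a, hB2, hB, Finset.mem_coe, Finset.mem_filter, and_true, true_and, memS] at hp
      simp only [Prod.mk.injEq, true_and, and_true]
      omega
    · intro x _; rfl
  -- B2b1 : quadrant x > Hx, y < Hy
  have cB2b1 : B2b1.card =
      (Finset.Icc (max (Hx + 1) (Hx + m - Hy + 1)) (min Lx (Hx + m - 1))).card := by
    apply Finset.card_nbij' (i := fun p => p.1) (j := fun x => (x, Hy - m + x - Hx))
    · intro p hp
      simp only [hB2b1, hB2b, hB2, hB, Finset.mem_coe, Finset.mem_filter, and_true, true_and, memS, Finset.mem_Icc] at hp ⊢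
      omega
    · intro x hx
      simp only [Finset.mem_coe, Finset.mem_Icc] at hx
      simp only [hB2b1, hB2b, hB2, hB, Finset.mem_coe, Finset.mem_filter, and_true, true_and, memS]
      omega
    · intro p hp
      obtain ⟨x, y⟩ := p
      simp only [hB2b1, hB2b, hB2, hB, Finset.mem_coe, Finset.mem_filter, and_true, true_and, memS] at hp
      simp only [Prod.mk.injEq, true_and, and_true]
      omega
    · intro x _; rfl
  -- B2b2 : quadrant x > Hx, y > Hy
  have cB2b2 : B2b2.card =
      (Finset.Icc (max (Hx + 1) (Hx + m + Hy - Ly)) (min Lx (Hx + m - 1))).card := by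
    apply Finset.card_nbij' (i := fun p => p.1) (j := fun x => (x, Hy + m - x + Hx))
    · intro p hp
      simp only [hB2b2, hB2b, hB2, hB, Finset.mem_coe, Finset.mem_filter, and_true, true_and, memS, Finset.mem_Icc] at hp ⊢
      omega
    · intro x hx
      simp only [Finset.mem_coe, Finset.mem_Icc] at hx
      simp only [hB2b2, hB2b, hB2, hB, Finset.mem_coe, Finset.mem_filter, and_true, true_and, memS]
      omega
    · intro p hp
      obtain ⟨x, y⟩ := p
      simp only [hB2b2, hB2b, hB2, hB, Finset.mem_coe, Finset.mem_filter, and_true, true_and, memS] at hp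
      simp only [Prod.mk.injEq, true_and, and_true]
      omega
    · intro x _; rfl
  have hsum : S.card = A1.card + A2.card + B1a.card + B1b.card +
      B2a1.card + B2a2.card + B2b1.card + B2b2.card := by omega
  have e1 : max 0 (Hx - m + 1 - max 1 (Hx - m)) = 1 - Nfun Hx m := by
    rw [Nfun_eq]; omega
  have e2 : max 0 (min Lx (Hx + m) + 1 - (Hx + m)) = 1 - Nfun (Lx - Hx + 1) m := by
    rw [Nfun_eq]; omega
  have e3 : max 0 (Hy - m + 1 - max 1 (Hy - m)) = 1 - Nfun Hy m := by
    rw [Nfun_eq]; omega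
  have e4 : max 0 (min Ly (Hy + m) + 1 - (Hy + m)) = 1 - Nfun (Ly - Hy + 1) m := by
    rw [Nfun_eq]; omega
  have e5 : max 0 (min (Hx - 1) (Hx + Hy - m - 1) + 1 - max 1 (Hx - m + 1)) =
      (m - 1) - Mfun Hy Hx m := by
    rw [Mfun_eq Hy Hx m hHy1 hHx1 hm]; omega
  have e6 : max 0 (min (Hx - 1) (Hx + Ly - Hy - m) + 1 - max 1 (Hx - m + 1)) =
      (m - 1) - Mfun (Ly - Hy + 1) Hx m := by
    rw [Mfun_eq (Ly - Hy + 1) Hx m (by omega) hHx1 hm]; omega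
  have e7 : max 0 (min Lx (Hx + m - 1) + 1 - max (Hx + 1) (Hx + m - Hy + 1)) =
      (m - 1) - Mfun Hy (Lx - Hx + 1) m := by
    rw [Mfun_eq Hy (Lx - Hx + 1) m hHy1 (by omega) hm]; omega
  have e8 : max 0 (min Lx (Hx + m - 1) + 1 - max (Hx + 1) (Hx + m + Hy - Ly)) =
      (m - 1) - Mfun (Ly - Hy + 1) (Lx - Hx + 1) m := by
    rw [Mfun_eq (Ly - Hy + 1) (Lx - Hx + 1) m (by omega) (by omega) hm]; omega
  have key : (S.card : ℤ) =
      (1 - Nfun Hx m) + (1 - Nfun (Lx - Hx + 1) m) + (1 - Nfun Hy m) +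
      (1 - Nfun (Ly - Hy + 1) m) + ((m - 1) - Mfun Hy Hx m) +
      ((m - 1) - Mfun (Ly - Hy + 1) Hx m) + ((m - 1) - Mfun Hy (Lx - Hx + 1) m) +
      ((m - 1) - Mfun (Ly - Hy + 1) (Lx - Hx + 1) m) := by
    rw [hsum, cA1, cA2, cB1a, cB1b, cB2a1, cB2a2, cB2b1, cB2b2]
    push_cast
    rw [cardIccZ, cardIccZ, cardIccZ, cardIccZ, cardIccZ, cardIccZ, cardIccZ, cardIccZ,
      e1, e2, e3, e4, e5, e6, e7, e8]
  rw [key, alphaFun]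
  ring
end

section
/- In a one-dimensional lattice of $L$ sites with a single inaccessible site at position $p$, the number of unordered pairs of accessible sites on opposite sides of $p$ with separation $|i-j| = m$ is $\min\big(-|m - \frac{L+1}{2}| + \frac{L-1}{2},\ \min(p, L-p+1) - 1\big)$ when this is nonnegative, and $0$ otherwise; in particular it is nonzero only for $2 \le m \le L-1$. -/
/-- Number of unordered pairs `{i, j}` of accessible sites of the one-dimensional lattice
`{1,…,L}` with `i < p < j` and separation `j - i = m`, where `p` is the single
inaccessible site. -/
noncomputable def crossCount1 (L p m : ℤ) : ℕ :=
  (((Finset.Icc 1 (p - 1)) ×ˢ (Finset.Icc (p + 1) L)).filter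
    (fun q => q.2 - q.1 = m)).card

lemma count_eq (L p m : ℤ) (hp1 : 1 < p) (hpL : p < L) :
    (crossCount1 L p m : ℤ) = max 0 (min (min (m-1) (L-m)) (min (p-1) (L-p))) := by
  have h : crossCount1 L p m = (Finset.Icc (max 1 (p+1-m)) (min (p-1) (L-m))).card := by
    unfold crossCount1
    apply Finset.card_bij' (fun q _ => q.1) (fun i _ => (i, i + m))
    · intro q hq
      simp only [Finset.mem_filter, Finset.mem_product, Finset.mem_Icc] at hq ⊢
      omega
    · intro i hi
      simp only [Finset.mem_filter, Finset.mem_product, Finset.mem_Icc] at hi ⊢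
      omega
    · intro q hq
      simp only [Finset.mem_filter, Finset.mem_product, Finset.mem_Icc] at hq
      obtain ⟨_, h2⟩ := hq
      ext <;> simp <;> omega
    · intro i _; rfl
  rw [h, Int.card_Icc]
  omega

theorem stmt14 (L p m : ℤ) (hp1 : 1 < p) (hpL : p < L) :
    (((0 : ℚ) ≤ min (-|(m : ℚ) - (L + 1) / 2| + (L - 1) / 2)
        (((min p (L - p + 1) : ℤ) : ℚ) - 1) →
      (crossCount1 L p m : ℚ) =
        min (-|(m : ℚ) - (L + 1) / 2| + (L - 1) / 2)
          (((min p (L - p + 1) : ℤ) : ℚ) - 1)) ∧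
    (min (-|(m : ℚ) - (L + 1) / 2| + (L - 1) / 2)
        (((min p (L - p + 1) : ℤ) : ℚ) - 1) < 0 →
      crossCount1 L p m = 0)) ∧
    (crossCount1 L p m ≠ 0 → 2 ≤ m ∧ m ≤ L - 1) := by
  have hc := count_eq L p m hp1 hpL
  set N : ℤ := min (min (m-1) (L-m)) (min (p-1) (L-p)) with hN
  have hR : min (-|(m : ℚ) - (L + 1) / 2| + (L - 1) / 2)
      (((min p (L - p + 1) : ℤ) : ℚ) - 1) = (N : ℚ) := by
    have h1 : -|(m : ℚ) - (L + 1) / 2| + (L - 1) / 2 = ((min (m-1) (L-m) : ℤ) : ℚ) := by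
      rcases abs_cases ((m : ℚ) - (L + 1) / 2) with ⟨ha, hb⟩ | ⟨ha, hb⟩
      · rw [ha, Int.cast_min, min_eq_right (by push_cast; linarith : ((L - m : ℤ) : ℚ) ≤ ((m - 1 : ℤ) : ℚ))]
        push_cast; ring
      · rw [ha, Int.cast_min, min_eq_left (by push_cast; linarith : ((m - 1 : ℤ) : ℚ) ≤ ((L - m : ℤ) : ℚ))]
        push_cast; ring
    have h2 : ((min p (L - p + 1) : ℤ) : ℚ) - 1 = ((min (p-1) (L-p) : ℤ) : ℚ) := by
      have : (min p (L - p + 1) : ℤ) - 1 = min (p-1) (L-p) := by omega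
      exact_mod_cast congrArg (Int.cast : ℤ → ℚ) this
    rw [h1, h2, hN, ← Int.cast_min]
  rw [hR]
  refine ⟨⟨fun h => ?_, fun h => ?_⟩, fun h => ?_⟩
  · have hN0 : 0 ≤ N := by exact_mod_cast h
    have : (crossCount1 L p m : ℤ) = N := by omega
    exact_mod_cast this
  · have hN0 : N < 0 := by exact_mod_cast h
    have : (crossCount1 L p m : ℤ) = 0 := by omega
    exact_mod_cast this
  · have : (crossCount1 L p m : ℤ) ≠ 0 := by exact_mod_cast h
    omega
end

section
/- In a one-dimensional lattice of $X$ sites with a contiguous block of $n$ inaccessible sites ($1 \le n \le X - 2$) with $a \ge 1$ accessible sites to the left and $b \ge 1$ to the right ($a + n + b = X$), the total number of cross-block unordered pairs of accessible sites is $ab$, and this equals $\sum_{m} \max\big(0, \min(-|m - \frac{X+n}{2}| + \frac{X-n}{2}, \min(a,b))\big)$ where the sum ranges over integers $m$ with $n+1 \le m \le X-1$. -/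
open Finset

theorem stmt17 (X n a b : ℤ) (hn : 1 ≤ n) (hnX : n ≤ X - 2)
    (ha : 1 ≤ a) (hb : 1 ≤ b) (hsum : a + n + b = X) :
    (((Finset.Icc 1 a) ×ˢ (Finset.Icc (a + n + 1) X)).card : ℤ) = a * b ∧
    ((a * b : ℤ) : ℚ) =
      ∑ m ∈ Finset.Icc (n + 1) (X - 1),
        max 0 (min (-|(m : ℚ) - (X + n) / 2| + (X - n) / 2) ((min a b : ℤ) : ℚ)) := by
  have hcard : (((Finset.Icc 1 a) ×ˢ (Finset.Icc (a + n + 1) X)).card : ℤ) = a * b := by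
    rw [Finset.card_product, Int.card_Icc, Int.card_Icc]
    push_cast
    rw [Int.toNat_of_nonneg (by omega), Int.toNat_of_nonneg (by omega)]
    ring_nf
    nlinarith [hsum]
  refine ⟨hcard, ?_⟩
  -- fiberwise counting
  have hfib : ((Finset.Icc 1 a) ×ˢ (Finset.Icc (a + n + 1) X)).card
      = ∑ m ∈ Finset.Icc (n + 1) (X - 1),
        (((Finset.Icc 1 a) ×ˢ (Finset.Icc (a + n + 1) X)).filter
          (fun p => p.2 - p.1 = m)).card := by
    apply Finset.card_eq_sum_card_fiberwise
    intro p hp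
    simp only [Finset.coe_product, Set.mem_prod, Finset.mem_coe, Finset.mem_product, Finset.mem_Icc] at hp ⊢
    omega
  have hfibcard : ∀ m : ℤ, ((((Finset.Icc 1 a) ×ˢ (Finset.Icc (a + n + 1) X)).filter
      (fun p => p.2 - p.1 = m)).card : ℤ)
      = max 0 (min (min (m - n) (X - m)) (min a b)) := by
    intro m
    have him : (((Finset.Icc 1 a) ×ˢ (Finset.Icc (a + n + 1) X)).filter
        (fun p => p.2 - p.1 = m))
        = (Finset.Icc (max 1 (a + n + 1 - m)) (min a (X - m))).image
          (fun i => (i, i + m)) := by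
      ext ⟨i, j⟩
      simp only [Finset.mem_filter, Finset.mem_product, Finset.mem_Icc, Finset.mem_image,
        Prod.mk.injEq, le_min_iff, max_le_iff, Finset.mem_Icc]
      constructor
      · rintro ⟨⟨⟨h1, h2⟩, h3, h4⟩, h5⟩
        exact ⟨i, by omega, rfl, by omega⟩
      · rintro ⟨k, hk, rfl, rfl⟩
        omega
    rw [him, Finset.card_image_of_injective _
      (fun x y h => by simpa using congrArg Prod.fst h), Int.card_Icc]
    omega
  have hptwise : ∀ m ∈ Finset.Icc (n + 1) (X - 1),
      max 0 (min (-|(m : ℚ) - (X + n) / 2| + (X - n) / 2) ((min a b : ℤ) : ℚ))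
      = ((max 0 (min (min (m - n) (X - m)) (min a b)) : ℤ) : ℚ) := by
    intro m hm
    have habs : -|(m : ℚ) - (X + n) / 2| + (X - n) / 2
        = min ((m : ℚ) - n) ((X : ℚ) - m) := by
      rcases abs_cases ((m : ℚ) - (X + n) / 2) with ⟨h1, h2⟩ | ⟨h1, h2⟩
      · rw [h1, min_eq_right (by linarith)]; ring
      · rw [h1, min_eq_left (by linarith)]; ring
    rw [habs]
    push_cast
    ring_nf
  calc ((a * b : ℤ) : ℚ) = ((((Finset.Icc 1 a) ×ˢ (Finset.Icc (a + n + 1) X)).card : ℤ) : ℚ) := by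
        rw [hcard]
    _ = ∑ m ∈ Finset.Icc (n + 1) (X - 1),
        ((max 0 (min (min (m - n) (X - m)) (min a b)) : ℤ) : ℚ) := by
        rw_mod_cast [hfib]
        push_cast [hfibcard]
        rfl
    _ = _ := by
        rw [Finset.sum_congr rfl hptwise]
end
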